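/- Suppose C ⊆ Q^m with q = |Q| ≥ 3, and {J_1,...,J_ℓ} is a partition of {1,...,m} into blocks of size k ≥ 3 with ℓ ≥ 2, such that π_{J_i}(C) = Rep(k,q) for all i (each projection is the repetition code). Assume C contains the all-ones vertex α = (1,...,1) and has minimum distance δ ≥ 3, with blocks J_i = {(i−1)k+1,...,ik}. Let μ agree with α except μ_1 = 2, μ_2 = 3, and let ν agree with α except ν_1 = 2, ν_{k+1} = 2. Then d(μ,C) = d(ν,C) = 2, but no automorphism of the form (h,...,h over each block)σ with σ preserving the block partition and acting constantly on blocks maps μ to ν. -/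

import Mathlib

/-- Distance from a vertex to a code; coordinates are indexed by `Fin ℓ × Fin k`,
where the block `J_i` consists of the coordinates `(i, j)`, `j ∈ Fin k`. -/
noncomputable def distToCode {ℓ k q : ℕ} (C : Set (Fin ℓ × Fin k → Fin q))
    (ν : Fin ℓ × Fin k → Fin q) : ℕ :=
  sInf {n | ∃ c ∈ C, hammingDist ν c = n}

theorem stmt_14 (ℓ k q : ℕ) (hq : 3 ≤ q) (hk : 3 ≤ k) (hℓ : 2 ≤ ℓ)
    (C : Set (Fin ℓ × Fin k → Fin q))
    -- each block projection of C is the repetition code Rep(k,q)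
    (hproj : ∀ i : Fin ℓ,
      {f : Fin k → Fin q | ∃ c ∈ C, f = fun j => c (i, j)}
        = {f | ∃ a : Fin q, f = fun _ => a})
    -- C contains the all-ones vertex α (0-based symbols)
    (hα : (fun _ => (⟨0, by omega⟩ : Fin q)) ∈ C)
    -- C has minimum distance δ ≥ 3
    (hδ : ∀ a ∈ C, ∀ b ∈ C, a ≠ b → 3 ≤ hammingDist a b)
    (μ ν : Fin ℓ × Fin k → Fin q)
    -- μ agrees with α except μ₁ = 2, μ₂ = 3 (both changes in the first block)
    (hμ : ∀ p : Fin ℓ × Fin k, μ p =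
      if p.1.val = 0 ∧ p.2.val = 0 then ⟨1, by omega⟩
      else if p.1.val = 0 ∧ p.2.val = 1 then ⟨2, by omega⟩
      else ⟨0, by omega⟩)
    -- ν agrees with α except ν₁ = 2, ν_{k+1} = 2 (first entries of the first two blocks)
    (hν : ∀ p : Fin ℓ × Fin k, ν p =
      if p.1.val ≤ 1 ∧ p.2.val = 0 then ⟨1, by omega⟩
      else ⟨0, by omega⟩) :
    distToCode C μ = 2 ∧ distToCode C ν = 2 ∧
    -- no element of Diag_k(S_q) ≀ S_ℓ (a single alphabet permutation within each
    -- block, with a partition-preserving coordinate permutation) maps μ to ν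
    ∀ (h : Fin ℓ → Equiv.Perm (Fin q)) (τ : Equiv.Perm (Fin ℓ))
      (ρ : Fin ℓ → Equiv.Perm (Fin k)),
      (fun p : Fin ℓ × Fin k =>
        h (τ⁻¹ p.1) (μ (τ⁻¹ p.1, (ρ (τ⁻¹ p.1))⁻¹ p.2))) ≠ ν := by
  have hconst : ∀ c ∈ C, ∀ i : Fin ℓ, ∃ a : Fin q, ∀ j, c (i, j) = a := by
    intro c hc i
    have hm : (fun j => c (i, j)) ∈ {f : Fin k → Fin q | ∃ a : Fin q, f = fun _ => a} := by
      rw [← hproj i]; exact ⟨c, hc, rfl⟩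
    obtain ⟨a, ha⟩ := hm
    exact ⟨a, fun j => congrFun ha j⟩
  -- Hamming distance from μ resp. ν to the all-zero word is 2
  have hdμ : hammingDist μ (fun _ => (⟨0, by omega⟩ : Fin q)) = 2 := by
    have hset : ({p | μ p ≠ (⟨0, by omega⟩ : Fin q)} : Finset (Fin ℓ × Fin k))
        = {((⟨0, by omega⟩ : Fin ℓ), (⟨0, by omega⟩ : Fin k)),
           ((⟨0, by omega⟩ : Fin ℓ), (⟨1, by omega⟩ : Fin k))} := by
      ext ⟨⟨i, hi⟩, ⟨j, hj⟩⟩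
      simp only [Finset.mem_filter, Finset.mem_univ, true_and, Finset.mem_insert,
        Finset.mem_singleton, hμ, Prod.mk.injEq, Fin.mk.injEq, Fin.ext_iff]
      split_ifs with h1 h2 <;> simp <;> omega
    show ({p | μ p ≠ (⟨0, by omega⟩ : Fin q)} : Finset (Fin ℓ × Fin k)).card = 2
    rw [hset]
    rw [Finset.card_pair (by simp [Prod.ext_iff, Fin.ext_iff])]
  have hdν : hammingDist ν (fun _ => (⟨0, by omega⟩ : Fin q)) = 2 := by
    have hset : ({p | ν p ≠ (⟨0, by omega⟩ : Fin q)} : Finset (Fin ℓ × Fin k))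
        = {((⟨0, by omega⟩ : Fin ℓ), (⟨0, by omega⟩ : Fin k)),
           ((⟨1, by omega⟩ : Fin ℓ), (⟨0, by omega⟩ : Fin k))} := by
      ext ⟨⟨i, hi⟩, ⟨j, hj⟩⟩
      simp only [Finset.mem_filter, Finset.mem_univ, true_and, Finset.mem_insert,
        Finset.mem_singleton, hν, Prod.mk.injEq, Fin.mk.injEq, Fin.ext_iff]
      split_ifs with h1 <;> simp <;> omega
    show ({p | ν p ≠ (⟨0, by omega⟩ : Fin q)} : Finset (Fin ℓ × Fin k)).card = 2
    rw [hset]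
    rw [Finset.card_pair (by simp [Prod.ext_iff, Fin.ext_iff])]
  -- lower bounds
  have hlbμ : ∀ c ∈ C, 2 ≤ hammingDist μ c := by
    intro c hc
    obtain ⟨a, ha⟩ := hconst c hc ⟨0, by omega⟩
    have hd0 : a.val ≠ 1 → μ ((⟨0, by omega⟩ : Fin ℓ), (⟨0, by omega⟩ : Fin k))
        ≠ c (⟨0, by omega⟩, ⟨0, by omega⟩) := by
      intro h1; simp only [hμ, ha]; simp [Fin.ext_iff]; omega
    have hd1 : a.val ≠ 2 → μ ((⟨0, by omega⟩ : Fin ℓ), (⟨1, by omega⟩ : Fin k))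
        ≠ c (⟨0, by omega⟩, ⟨1, by omega⟩) := by
      intro h1; simp only [hμ, ha]; simp [Fin.ext_iff]; omega
    have hd2 : a.val ≠ 0 → μ ((⟨0, by omega⟩ : Fin ℓ), (⟨2, by omega⟩ : Fin k))
        ≠ c (⟨0, by omega⟩, ⟨2, by omega⟩) := by
      intro h1; simp only [hμ, ha]; simp [Fin.ext_iff]; omega
    have hn01 : ((⟨0, by omega⟩ : Fin ℓ), (⟨0, by omega⟩ : Fin k))
        ≠ ((⟨0, by omega⟩ : Fin ℓ), (⟨1, by omega⟩ : Fin k)) := by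
      simp [Prod.ext_iff, Fin.ext_iff]
    have hn02 : ((⟨0, by omega⟩ : Fin ℓ), (⟨0, by omega⟩ : Fin k))
        ≠ ((⟨0, by omega⟩ : Fin ℓ), (⟨2, by omega⟩ : Fin k)) := by
      simp [Prod.ext_iff, Fin.ext_iff]
    have hn12 : ((⟨0, by omega⟩ : Fin ℓ), (⟨1, by omega⟩ : Fin k))
        ≠ ((⟨0, by omega⟩ : Fin ℓ), (⟨2, by omega⟩ : Fin k)) := by
      simp [Prod.ext_iff, Fin.ext_iff]
    have h2 : ∃ p p' : Fin ℓ × Fin k, p ≠ p' ∧ μ p ≠ c p ∧ μ p' ≠ c p' := by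
      by_cases h1 : a.val = 1
      · exact ⟨_, _, hn12, hd1 (by omega), hd2 (by omega)⟩
      · by_cases hb : a.val = 2
        · exact ⟨_, _, hn02, hd0 (by omega), hd2 (by omega)⟩
        · exact ⟨_, _, hn01, hd0 h1, hd1 hb⟩
    obtain ⟨p, p', hne, hp, hp'⟩ := h2
    exact Finset.one_lt_card.mpr ⟨p, by simpa using hp, p', by simpa using hp', hne⟩
  have hlbν : ∀ c ∈ C, 2 ≤ hammingDist ν c := by
    intro c hc
    obtain ⟨a, ha⟩ := hconst c hc ⟨0, by omega⟩
    obtain ⟨b, hb⟩ := hconst c hc ⟨1, by omega⟩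
    have hblock0 : ∃ j : Fin k, ν ((⟨0, by omega⟩ : Fin ℓ), j) ≠ c (⟨0, by omega⟩, j) := by
      by_cases h1 : a.val = 1
      · refine ⟨⟨1, by omega⟩, ?_⟩
        simp only [hν, ha]; simp [Fin.ext_iff]; omega
      · refine ⟨⟨0, by omega⟩, ?_⟩
        simp only [hν, ha]; simp [Fin.ext_iff]; omega
    have hblock1 : ∃ j : Fin k, ν ((⟨1, by omega⟩ : Fin ℓ), j) ≠ c (⟨1, by omega⟩, j) := by
      by_cases h1 : b.val = 1
      · refine ⟨⟨1, by omega⟩, ?_⟩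
        simp only [hν, hb]; simp [Fin.ext_iff]; omega
      · refine ⟨⟨0, by omega⟩, ?_⟩
        simp only [hν, hb]; simp [Fin.ext_iff]; omega
    obtain ⟨j1, hj1⟩ := hblock0
    obtain ⟨j2, hj2⟩ := hblock1
    have hne : ((⟨0, by omega⟩ : Fin ℓ), j1) ≠ ((⟨1, by omega⟩ : Fin ℓ), j2) := by
      simp [Prod.ext_iff, Fin.ext_iff]
    exact Finset.one_lt_card.mpr ⟨_, by simpa using hj1, _, by simpa using hj2, hne⟩
  refine ⟨?_, ?_, ?_⟩
  · have hS : (2 : ℕ) ∈ {n | ∃ c ∈ C, hammingDist μ c = n} := ⟨_, hα, hdμ⟩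
    exact le_antisymm (Nat.sInf_le hS)
      (le_csInf ⟨2, hS⟩ (by rintro n ⟨c, hc, rfl⟩; exact hlbμ c hc))
  · have hS : (2 : ℕ) ∈ {n | ∃ c ∈ C, hammingDist ν c = n} := ⟨_, hα, hdν⟩
    exact le_antisymm (Nat.sInf_le hS)
      (le_csInf ⟨2, hS⟩ (by rintro n ⟨c, hc, rfl⟩; exact hlbν c hc))
  · intro h τ ρ heq
    have key : ∀ j : Fin k, h (τ⁻¹ ⟨1, by omega⟩) (μ (τ⁻¹ ⟨1, by omega⟩, j))
        = ν (⟨1, by omega⟩, ρ (τ⁻¹ ⟨1, by omega⟩) j) := by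
      intro j
      have hc := congrFun heq ((⟨1, by omega⟩ : Fin ℓ), ρ (τ⁻¹ ⟨1, by omega⟩) j)
      simpa using hc
    by_cases hz : (τ⁻¹ (⟨1, by omega⟩ : Fin ℓ)).val = 0
    · have k0 := key ⟨0, by omega⟩
      have k1 := key ⟨1, by omega⟩
      have k2 := key ⟨2, by omega⟩
      simp only [hμ, hν, hz] at k0 k1 k2
      simp at k0 k1 k2
      by_cases b0 : ((ρ (Equiv.symm τ (⟨1, by omega⟩ : Fin ℓ))) (⟨0, by omega⟩ : Fin k)).val = 0 <;>
        by_cases b1 : ((ρ (Equiv.symm τ (⟨1, by omega⟩ : Fin ℓ))) (⟨1, by omega⟩ : Fin k)).val = 0 <;>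
        by_cases b2 : ((ρ (Equiv.symm τ (⟨1, by omega⟩ : Fin ℓ))) (⟨2, by omega⟩ : Fin k)).val = 0 <;>
        simp only [b0, b1, b2, if_true, if_false, if_pos, if_neg] at k0 k1 k2 <;>
      first
        | (have e := (ρ (τ⁻¹ (⟨1, by omega⟩ : Fin ℓ))).injective
            (Fin.ext (b0.trans b1.symm)); simp [Fin.ext_iff] at e)
        | (have e := (ρ (τ⁻¹ (⟨1, by omega⟩ : Fin ℓ))).injective
            (Fin.ext (b0.trans b2.symm)); simp [Fin.ext_iff] at e)
        | (have e := (ρ (τ⁻¹ (⟨1, by omega⟩ : Fin ℓ))).injective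
            (Fin.ext (b1.trans b2.symm)); simp [Fin.ext_iff] at e)
        | (have e := (h (τ⁻¹ (⟨1, by omega⟩ : Fin ℓ))).injective
            (k0.trans k1.symm); simp [Fin.ext_iff] at e)
        | (have e := (h (τ⁻¹ (⟨1, by omega⟩ : Fin ℓ))).injective
            (k0.trans k2.symm); simp [Fin.ext_iff] at e)
        | (have e := (h (τ⁻¹ (⟨1, by omega⟩ : Fin ℓ))).injective
            (k1.trans k2.symm); simp [Fin.ext_iff] at e)
    · have k0 := key ((ρ (τ⁻¹ ⟨1, by omega⟩))⁻¹ ⟨0, by omega⟩)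
      have k1 := key ((ρ (τ⁻¹ ⟨1, by omega⟩))⁻¹ ⟨1, by omega⟩)
      simp only [hμ, hν, hz] at k0 k1
      simp at k0 k1
      have e := k0.symm.trans k1
      simp [Fin.ext_iff] at e
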